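/- arXiv:1011.2679 — 3 statements merged into one kernel-verified Lean document; each statement's English description precedes it below -/
import Mathlib

section
/- Let n₁, n₂, n₃ be positive integers and let Ξ be the set of sequences of length n₁+n₂+n₃ over the three symbols {a, b, c} containing exactly n₁ a's, n₂ b's, and n₃ c's. Let X be uniformly distributed on Ξ. Define a random modification: choose uniformly at random one occurrence of a and (independently) one occurrence of c in X, and replace both by b. Then the resulting random sequence is uniformly distributed on the set of sequences with exactly n₁−1 a's, n₂+2 b's, and n₃−1 c's. -/
open Finset

/-- Number of occurrences of the symbol `s` in the string `x`. -/
def scount (n : ℕ) (x : Fin n → Fin 3) (s : Fin 3) : ℕ :=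
  (Finset.univ.filter (fun i => x i = s)).card

/-- The set of strings of length `n` with exactly `n₁` `a`'s (`0`), `n₂` `b`'s (`1`)
and `n₃` `c`'s (`2`). -/
def stringsWith (n n₁ n₂ n₃ : ℕ) : Finset (Fin n → Fin 3) :=
  Finset.univ.filter
    (fun x => scount n x 0 = n₁ ∧ scount n x 1 = n₂ ∧ scount n x 2 = n₃)

/-- Replace the symbols at positions `i` and `j` of `x` by `b` (`1`). -/
def blockModify (n : ℕ) (x : Fin n → Fin 3) (i j : Fin n) : Fin n → Fin 3 :=
  fun p => if p = i ∨ p = j then 1 else x p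

section Aux

variable {n : ℕ}

lemma bm_counts {x : Fin n → Fin 3} {i j : Fin n} (hi : x i = 0) (hj : x j = 2) :
    scount n x 0 = scount n (blockModify n x i j) 0 + 1 ∧
    scount n (blockModify n x i j) 1 = scount n x 1 + 2 ∧
    scount n x 2 = scount n (blockModify n x i j) 2 + 1 := by
  have hij : i ≠ j := by rintro rfl; rw [hi] at hj; exact absurd hj (by decide)
  have f0 : univ.filter (fun p => blockModify n x i j p = 0)
      = (univ.filter (fun p => x p = 0)).erase i := by
    ext p
    simp only [mem_filter, mem_univ, true_and]
    by_cases hpi : p = i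
    · subst hpi; simp [blockModify]
    · by_cases hpj : p = j
      · subst hpj; simp [blockModify, hj, hpi]
      · simp [blockModify, hpi, hpj]
  have f1 : univ.filter (fun p => blockModify n x i j p = 1)
      = insert i (insert j (univ.filter (fun p => x p = 1))) := by
    ext p
    by_cases hpi : p = i
    · subst hpi; simp [blockModify]
    · by_cases hpj : p = j
      · subst hpj; simp [blockModify]
      · simp [blockModify, hpi, hpj]
  have f2 : univ.filter (fun p => blockModify n x i j p = 2)
      = (univ.filter (fun p => x p = 2)).erase j := by
    ext p
    simp only [mem_filter, mem_univ, true_and]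
    by_cases hpi : p = i
    · subst hpi; simp [blockModify, hi, hij]
    · by_cases hpj : p = j
      · subst hpj; simp [blockModify]
      · simp [blockModify, hpi, hpj]
  refine ⟨?_, ?_, ?_⟩
  · rw [scount, scount, f0, card_erase_of_mem (by simp [hi])]
    have : 0 < (univ.filter (fun p => x p = 0)).card :=
      card_pos.mpr ⟨i, by simp [hi]⟩
    omega
  · rw [scount, scount, f1, card_insert_of_notMem (by simp [hij, hi]),
      card_insert_of_notMem (by simp [hj])]
  · rw [scount, scount, f2, card_erase_of_mem (by simp [hj])]
    have : 0 < (univ.filter (fun p => x p = 2)).card :=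
      card_pos.mpr ⟨j, by simp [hj]⟩
    omega

lemma bm_mem {n₁ n₂ n₃ : ℕ} {x : Fin n → Fin 3} {i j : Fin n}
    (hx : x ∈ stringsWith n n₁ n₂ n₃) (hi : x i = 0) (hj : x j = 2) :
    blockModify n x i j ∈ stringsWith n (n₁ - 1) (n₂ + 2) (n₃ - 1) := by
  simp only [stringsWith, mem_filter, mem_univ, true_and] at hx ⊢
  obtain ⟨c0, c1, c2⟩ := bm_counts hi hj
  omega

/-- The canonical preimage: set position `i` to `0` and `j` to `2`. -/
def blockBack (n : ℕ) (xt : Fin n → Fin 3) (i j : Fin n) : Fin n → Fin 3 :=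
  fun p => if p = i then 0 else if p = j then 2 else xt p

lemma bb_counts {xt : Fin n → Fin 3} {i j : Fin n} (hij : i ≠ j)
    (hi : xt i = 1) (hj : xt j = 1) :
    scount n (blockBack n xt i j) 0 = scount n xt 0 + 1 ∧
    scount n xt 1 = scount n (blockBack n xt i j) 1 + 2 ∧
    scount n (blockBack n xt i j) 2 = scount n xt 2 + 1 := by
  have f0 : univ.filter (fun p => blockBack n xt i j p = 0)
      = insert i (univ.filter (fun p => xt p = 0)) := by
    ext p
    by_cases hpi : p = i
    · subst hpi; simp [blockBack]
    · by_cases hpj : p = j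
      · subst hpj; simp [blockBack, hpi, hj]
      · simp [blockBack, hpi, hpj]
  have f1 : univ.filter (fun p => xt p = 1)
      = insert i (insert j (univ.filter (fun p => blockBack n xt i j p = 1))) := by
    ext p
    simp only [mem_filter, mem_insert, mem_univ, true_and]
    by_cases hpi : p = i
    · subst hpi; simp [blockBack, hi]
    · by_cases hpj : p = j
      · subst hpj; simp [blockBack, hj]
      · simp [blockBack, hpi, hpj]
  have f2 : univ.filter (fun p => blockBack n xt i j p = 2)
      = insert j (univ.filter (fun p => xt p = 2)) := by
    ext p
    simp only [mem_filter, mem_univ, true_and]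
    by_cases hpi : p = i
    · subst hpi; simp [blockBack, hij, hi]
    · by_cases hpj : p = j
      · subst hpj; simp [blockBack, hpi]
      · simp [blockBack, hpi, hpj]
  refine ⟨?_, ?_, ?_⟩
  · rw [scount, scount, f0, card_insert_of_notMem (by simp [hi])]
  · rw [scount, scount, f1, card_insert_of_notMem (by simp only [mem_insert, mem_filter]; simp [blockBack, hij]),
      card_insert_of_notMem (by rw [mem_filter]; simp [blockBack, hij.symm])]
  · rw [scount, scount, f2, card_insert_of_notMem (by simp [hj])]

lemma bm_bb {xt : Fin n → Fin 3} {i j : Fin n} (hij : i ≠ j)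
    (hi : xt i = 1) (hj : xt j = 1) :
    blockModify n (blockBack n xt i j) i j = xt := by
  funext p
  by_cases hpi : p = i
  · subst hpi; simp [blockModify, hi]
  · by_cases hpj : p = j
    · subst hpj; simp [blockModify, hj]
    · simp [blockModify, blockBack, hpi, hpj]

lemma bm_unique {x xt : Fin n → Fin 3} {i j : Fin n} (hi : x i = 0) (hj : x j = 2)
    (h : blockModify n x i j = xt) : x = blockBack n xt i j := by
  have hij : i ≠ j := by rintro rfl; rw [hi] at hj; exact absurd hj (by decide)
  funext p
  by_cases hpi : p = i
  · subst hpi; simp [blockBack, hi]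
  · by_cases hpj : p = j
    · subst hpj; simp [blockBack, hpi, hj]
    · have := congrFun h p
      simp [blockModify, hpi, hpj] at this
      simp [blockBack, hpi, hpj, this]

end Aux

section Count

variable {n n₁ n₂ n₃ : ℕ}

lemma double_filter_sum {α : Type*} [Fintype α] (P Q : α → Prop) [DecidablePred P]
    [DecidablePred Q] (R : α → α → Prop) [∀ i j, Decidable (R i j)] :
    ∑ i ∈ univ.filter P, ∑ j ∈ univ.filter Q, (if R i j then (1:ℕ) else 0)
      = ∑ i ∈ univ, ∑ j ∈ univ, if P i ∧ Q j ∧ R i j then 1 else 0 := by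
  rw [Finset.sum_filter]
  refine Finset.sum_congr rfl fun i _ => ?_
  by_cases hP : P i
  · rw [if_pos hP, Finset.sum_filter]
    refine Finset.sum_congr rfl fun j _ => ?_
    by_cases hQ : Q j <;> simp [hP, hQ]
  · simp [hP]

lemma stmt7_inner_sum (h₁ : 0 < n₁) (h₃ : 0 < n₃) {xt : Fin n → Fin 3}
    (hxt : xt ∈ stringsWith n (n₁ - 1) (n₂ + 2) (n₃ - 1)) (i j : Fin n) :
    ∑ x ∈ stringsWith n n₁ n₂ n₃,
        (if x i = 0 ∧ x j = 2 ∧ blockModify n x i j = xt then (1:ℕ) else 0)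
      = if xt i = 1 ∧ xt j = 1 ∧ i ≠ j then 1 else 0 := by
  by_cases h : xt i = 1 ∧ xt j = 1 ∧ i ≠ j
  · obtain ⟨hi1, hj1, hij⟩ := h
    rw [if_pos ⟨hi1, hj1, hij⟩]
    simp only [Finset.sum_boole, Nat.cast_id]
    have hfe : (stringsWith n n₁ n₂ n₃).filter
        (fun x => x i = 0 ∧ x j = 2 ∧ blockModify n x i j = xt)
        = {blockBack n xt i j} := by
      ext x
      simp only [mem_filter, mem_singleton]
      constructor
      · rintro ⟨_, hxi, hxj, heq⟩; exact bm_unique hxi hxj heq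
      · rintro rfl
        have hbbi : blockBack n xt i j i = 0 := by simp [blockBack]
        have hbbj : blockBack n xt i j j = 2 := by simp [blockBack, hij.symm]
        refine ⟨?_, hbbi, hbbj, bm_bb hij hi1 hj1⟩
        obtain ⟨c0, c1, c2⟩ := bb_counts hij hi1 hj1
        simp only [stringsWith, mem_filter, mem_univ, true_and] at hxt ⊢
        omega
    rw [hfe, card_singleton]
  · rw [if_neg h]
    refine Finset.sum_eq_zero fun x hx => ?_
    rw [if_neg]
    rintro ⟨hxi, hxj, heq⟩
    apply h
    have hij : i ≠ j := by rintro rfl; rw [hxi] at hxj; exact absurd hxj (by decide)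
    subst heq
    exact ⟨by simp [blockModify], by simp [blockModify], hij⟩

lemma count_good (h₁ : 0 < n₁) (h₃ : 0 < n₃) {xt : Fin n → Fin 3}
    (hxt : xt ∈ stringsWith n (n₁ - 1) (n₂ + 2) (n₃ - 1)) :
    ∑ x ∈ stringsWith n n₁ n₂ n₃,
        ∑ i ∈ Finset.univ.filter (fun i => x i = 0),
          ∑ j ∈ Finset.univ.filter (fun j => x j = 2),
            (if blockModify n x i j = xt then (1:ℕ) else 0)
      = (n₂ + 2) * (n₂ + 1) := by
  have step1 : ∀ x : Fin n → Fin 3,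
      ∑ i ∈ Finset.univ.filter (fun i => x i = 0),
          ∑ j ∈ Finset.univ.filter (fun j => x j = 2),
            (if blockModify n x i j = xt then (1:ℕ) else 0)
        = ∑ i ∈ univ, ∑ j ∈ univ,
            if x i = 0 ∧ x j = 2 ∧ blockModify n x i j = xt then 1 else 0 := fun x =>
    double_filter_sum (fun i => x i = 0) (fun j => x j = 2)
      (fun i j => blockModify n x i j = xt)
  calc ∑ x ∈ stringsWith n n₁ n₂ n₃,
        ∑ i ∈ Finset.univ.filter (fun i => x i = 0),
          ∑ j ∈ Finset.univ.filter (fun j => x j = 2),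
            (if blockModify n x i j = xt then (1:ℕ) else 0)
      = ∑ x ∈ stringsWith n n₁ n₂ n₃, ∑ i ∈ univ, ∑ j ∈ univ,
            if x i = 0 ∧ x j = 2 ∧ blockModify n x i j = xt then 1 else 0 :=
        Finset.sum_congr rfl fun x _ => step1 x
    _ = ∑ i ∈ univ, ∑ j ∈ univ, ∑ x ∈ stringsWith n n₁ n₂ n₃,
            if x i = 0 ∧ x j = 2 ∧ blockModify n x i j = xt then 1 else 0 := by
        rw [Finset.sum_comm]
        exact Finset.sum_congr rfl fun i _ => Finset.sum_comm
    _ = ∑ i ∈ univ, ∑ j ∈ univ, if xt i = 1 ∧ xt j = 1 ∧ i ≠ j then 1 else 0 :=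
        Finset.sum_congr rfl fun i _ => Finset.sum_congr rfl fun j _ =>
          stmt7_inner_sum h₁ h₃ hxt i j
    _ = ∑ i ∈ univ.filter (fun i => xt i = 1), ∑ j ∈ univ.filter (fun j => xt j = 1),
            if i ≠ j then 1 else 0 :=
        (double_filter_sum (fun i => xt i = 1) (fun j => xt j = 1) (fun i j => i ≠ j)).symm
    _ = (n₂ + 2) * (n₂ + 1) := by
        have hB : (univ.filter (fun i => xt i = 1)).card = n₂ + 2 := by
          simpa [stringsWith, scount] using
            (by rw [stringsWith, mem_filter] at hxt; simpa [scount] using hxt.2 : _ ∧ _ ∧ _).2.1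
        calc ∑ i ∈ univ.filter (fun i => xt i = 1),
              ∑ j ∈ univ.filter (fun j => xt j = 1), (if i ≠ j then (1:ℕ) else 0)
            = ∑ i ∈ univ.filter (fun i => xt i = 1), (n₂ + 1) := by
              refine Finset.sum_congr rfl fun i hi => ?_
              simp only [Finset.sum_boole, Nat.cast_id]
              have : (univ.filter (fun j => xt j = 1)).filter (fun j => i ≠ j)
                  = (univ.filter (fun j => xt j = 1)).erase i := by
                ext j; simp [mem_erase, and_comm, ne_comm]
              rw [this, card_erase_of_mem hi, hB]; omega
          _ = (n₂ + 2) * (n₂ + 1) := by rw [Finset.sum_const, smul_eq_mul, hB]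

lemma count_bad {xt : Fin n → Fin 3}
    (hxt : xt ∉ stringsWith n (n₁ - 1) (n₂ + 2) (n₃ - 1)) :
    ∑ x ∈ stringsWith n n₁ n₂ n₃,
        ∑ i ∈ Finset.univ.filter (fun i => x i = 0),
          ∑ j ∈ Finset.univ.filter (fun j => x j = 2),
            (if blockModify n x i j = xt then (1:ℕ) else 0)
      = 0 := by
  refine Finset.sum_eq_zero fun x hx => Finset.sum_eq_zero fun i hi =>
    Finset.sum_eq_zero fun j hj => ?_
  rw [if_neg]
  intro heq
  simp only [mem_filter, mem_univ, true_and] at hi hj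
  exact hxt (heq ▸ bm_mem hx hi hj)

lemma card_identity (h₁ : 0 < n₁) (h₃ : 0 < n₃) :
    (stringsWith n (n₁ - 1) (n₂ + 2) (n₃ - 1)).card * ((n₂ + 2) * (n₂ + 1))
      = (stringsWith n n₁ n₂ n₃).card * (n₁ * n₃) := by
  have e1 : ∑ xt ∈ stringsWith n (n₁ - 1) (n₂ + 2) (n₃ - 1),
      ∑ x ∈ stringsWith n n₁ n₂ n₃,
        ∑ i ∈ Finset.univ.filter (fun i => x i = 0),
          ∑ j ∈ Finset.univ.filter (fun j => x j = 2),
            (if blockModify n x i j = xt then (1:ℕ) else 0)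
      = (stringsWith n (n₁ - 1) (n₂ + 2) (n₃ - 1)).card * ((n₂ + 2) * (n₂ + 1)) := by
    rw [Finset.sum_congr rfl fun xt hxt => count_good h₁ h₃ hxt,
      Finset.sum_const, smul_eq_mul]
  have e2 : ∑ xt ∈ stringsWith n (n₁ - 1) (n₂ + 2) (n₃ - 1),
      ∑ x ∈ stringsWith n n₁ n₂ n₃,
        ∑ i ∈ Finset.univ.filter (fun i => x i = 0),
          ∑ j ∈ Finset.univ.filter (fun j => x j = 2),
            (if blockModify n x i j = xt then (1:ℕ) else 0)
      = (stringsWith n n₁ n₂ n₃).card * (n₁ * n₃) := by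
    rw [Finset.sum_comm]
    have : ∀ x ∈ stringsWith n n₁ n₂ n₃,
        ∑ xt ∈ stringsWith n (n₁ - 1) (n₂ + 2) (n₃ - 1),
          ∑ i ∈ Finset.univ.filter (fun i => x i = 0),
            ∑ j ∈ Finset.univ.filter (fun j => x j = 2),
              (if blockModify n x i j = xt then (1:ℕ) else 0)
          = n₁ * n₃ := by
      intro x hx
      rw [Finset.sum_comm]
      have hA : (univ.filter (fun i => x i = 0)).card = n₁ :=
        (by rw [stringsWith, mem_filter] at hx; simpa [scount] using hx.2 : _ ∧ _ ∧ _).1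
      have hC : (univ.filter (fun j => x j = 2)).card = n₃ :=
        (by rw [stringsWith, mem_filter] at hx; simpa [scount] using hx.2 : _ ∧ _ ∧ _).2.2
      calc ∑ i ∈ Finset.univ.filter (fun i => x i = 0),
            ∑ xt ∈ stringsWith n (n₁ - 1) (n₂ + 2) (n₃ - 1),
              ∑ j ∈ Finset.univ.filter (fun j => x j = 2),
                (if blockModify n x i j = xt then (1:ℕ) else 0)
          = ∑ i ∈ Finset.univ.filter (fun i => x i = 0),
              ∑ j ∈ Finset.univ.filter (fun j => x j = 2),
                ∑ xt ∈ stringsWith n (n₁ - 1) (n₂ + 2) (n₃ - 1),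
                  (if blockModify n x i j = xt then (1:ℕ) else 0) :=
            Finset.sum_congr rfl fun i _ => Finset.sum_comm
        _ = ∑ i ∈ Finset.univ.filter (fun i => x i = 0),
              ∑ j ∈ Finset.univ.filter (fun j => x j = 2), (1:ℕ) := by
            refine Finset.sum_congr rfl fun i hi => Finset.sum_congr rfl fun j hj => ?_
            simp only [mem_filter, mem_univ, true_and] at hi hj
            rw [Finset.sum_ite_eq, if_pos (bm_mem hx hi hj)]
        _ = n₁ * n₃ := by simp [hA, hC, mul_comm]
    rw [Finset.sum_congr rfl this, Finset.sum_const, smul_eq_mul]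
  rw [← e1, e2]

end Count

/-- If `X` is uniform on the strings with exactly `n₁` `a`'s, `n₂` `b`'s and `n₃` `c`'s,
and we choose uniformly one occurrence of `a` and one occurrence of `c` and replace both
by `b`, then the result is uniform on the strings with `n₁−1` `a`'s, `n₂+2` `b`'s and
`n₃−1` `c`'s: for every string `xt`, the probability of obtaining `xt` equals the uniform
probability on the target set. -/
theorem stmt_7 (n₁ n₂ n₃ : ℕ) (h₁ : 0 < n₁) (h₂ : 0 < n₂) (h₃ : 0 < n₃) :
    ∀ xt : Fin (n₁ + n₂ + n₃) → Fin 3,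
      (∑ x ∈ stringsWith (n₁ + n₂ + n₃) n₁ n₂ n₃,
          ∑ i ∈ Finset.univ.filter (fun i => x i = 0),
            ∑ j ∈ Finset.univ.filter (fun j => x j = 2),
              (if blockModify (n₁ + n₂ + n₃) x i j = xt then (1 : ℝ) else 0))
          / (((stringsWith (n₁ + n₂ + n₃) n₁ n₂ n₃).card : ℝ) * n₁ * n₃)
        = if xt ∈ stringsWith (n₁ + n₂ + n₃) (n₁ - 1) (n₂ + 2) (n₃ - 1)
            then ((stringsWith (n₁ + n₂ + n₃) (n₁ - 1) (n₂ + 2) (n₃ - 1)).card : ℝ)⁻¹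
            else 0 := by
  intro xt
  have hcast : (∑ x ∈ stringsWith (n₁ + n₂ + n₃) n₁ n₂ n₃,
          ∑ i ∈ Finset.univ.filter (fun i => x i = 0),
            ∑ j ∈ Finset.univ.filter (fun j => x j = 2),
              (if blockModify (n₁ + n₂ + n₃) x i j = xt then (1 : ℝ) else 0))
      = ((∑ x ∈ stringsWith (n₁ + n₂ + n₃) n₁ n₂ n₃,
          ∑ i ∈ Finset.univ.filter (fun i => x i = 0),
            ∑ j ∈ Finset.univ.filter (fun j => x j = 2),
              (if blockModify (n₁ + n₂ + n₃) x i j = xt then (1 : ℕ) else 0) : ℕ) : ℝ) := by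
    push_cast
    rfl
  rw [hcast]
  by_cases hxt : xt ∈ stringsWith (n₁ + n₂ + n₃) (n₁ - 1) (n₂ + 2) (n₃ - 1)
  · rw [if_pos hxt, count_good h₁ h₃ hxt]
    have key := card_identity (n := n₁ + n₂ + n₃) (n₁ := n₁) (n₂ := n₂) (n₃ := n₃) h₁ h₃
    have hΞ' : 0 < (stringsWith (n₁ + n₂ + n₃) (n₁ - 1) (n₂ + 2) (n₃ - 1)).card :=
      card_pos.mpr ⟨xt, hxt⟩
    have hpos : 0 < (stringsWith (n₁ + n₂ + n₃) n₁ n₂ n₃).card * (n₁ * n₃) :=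
      key ▸ Nat.mul_pos hΞ' (by positivity)
    have hΞ : 0 < (stringsWith (n₁ + n₂ + n₃) n₁ n₂ n₃).card :=
      Nat.pos_of_ne_zero fun h0 => by simp [h0] at hpos
    have keyR : ((stringsWith (n₁ + n₂ + n₃) (n₁ - 1) (n₂ + 2) (n₃ - 1)).card : ℝ)
          * ((n₂ + 2) * (n₂ + 1))
        = ((stringsWith (n₁ + n₂ + n₃) n₁ n₂ n₃).card : ℝ) * (n₁ * n₃) := by
      exact_mod_cast key
    have a1 : ((stringsWith (n₁ + n₂ + n₃) n₁ n₂ n₃).card : ℝ) ≠ 0 :=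
      Nat.cast_ne_zero.mpr hΞ.ne'
    have a2 : (n₁ : ℝ) ≠ 0 := Nat.cast_ne_zero.mpr h₁.ne'
    have a3 : (n₃ : ℝ) ≠ 0 := Nat.cast_ne_zero.mpr h₃.ne'
    have a4 : ((stringsWith (n₁ + n₂ + n₃) (n₁ - 1) (n₂ + 2) (n₃ - 1)).card : ℝ) ≠ 0 :=
      Nat.cast_ne_zero.mpr hΞ'.ne'
    push_cast
    field_simp
    linear_combination keyR
  · rw [if_neg hxt, count_bad hxt]
    simp
end

section
/- Let Z be an integer-valued random variable taking values in a finite arithmetic progression {z₀, z₀+4, …, z₀+4d} whose probability mass function p satisfies 1 − K/√n ≤ p(z+4)/p(z) ≤ 1 + K/√n for all consecutive points (for a constant K > 0 and parameter n), and suppose the number of points satisfies d ≥ c√n/2 for a constant c > 0. Then there is a constant C > 0 depending only on K and c (not on n) such that Var[Z] ≥ C·n for all n large enough. -/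
open Finset Real

lemma var_double_sum (s : Finset ℕ) (p x : ℕ → ℝ) (hp : ∑ i ∈ s, p i = 1) :
    ∑ i ∈ s, p i * (x i - ∑ j ∈ s, p j * x j) ^ 2
      = (1/2) * ∑ i ∈ s, ∑ j ∈ s, p i * p j * (x i - x j) ^ 2 := by
  set μ := ∑ j ∈ s, p j * x j with hμ
  set A := ∑ j ∈ s, p j * x j ^ 2 with hA
  have hL : ∑ i ∈ s, p i * (x i - μ) ^ 2 = A - μ ^ 2 := by
    have h1 : ∀ i ∈ s, p i * (x i - μ) ^ 2
        = p i * x i ^ 2 - 2 * μ * (p i * x i) + μ ^ 2 * p i := by intros; ring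
    rw [Finset.sum_congr rfl h1, Finset.sum_add_distrib, Finset.sum_sub_distrib,
      ← Finset.mul_sum, ← Finset.mul_sum, ← hμ, ← hA, hp]
    ring
  have hR : ∀ i ∈ s, ∑ j ∈ s, p i * p j * (x i - x j) ^ 2
      = x i ^ 2 * p i - 2 * μ * (p i * x i) + A * p i := by
    intro i hi
    have h2 : ∀ j ∈ s, p i * p j * (x i - x j) ^ 2
        = (p i * x i ^ 2) * p j - (2 * (p i * x i)) * (p j * x j)
          + p i * (p j * x j ^ 2) := by intros; ring
    rw [Finset.sum_congr rfl h2, Finset.sum_add_distrib, Finset.sum_sub_distrib,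
      ← Finset.mul_sum, ← Finset.mul_sum, ← Finset.mul_sum, ← hμ, ← hA, hp]
    ring
  rw [hL, Finset.sum_congr rfl hR, Finset.sum_add_distrib, Finset.sum_sub_distrib,
    ← Finset.mul_sum, ← Finset.mul_sum]
  have e1 : ∑ i ∈ s, x i ^ 2 * p i = A := by
    rw [hA]; exact Finset.sum_congr rfl (fun i _ => by ring)
  rw [e1, ← hμ, hp]; ring

lemma chain_bound (d : ℕ) (p : ℕ → ℝ) (x : ℝ) (hx0 : 0 ≤ x) (hx1 : x ≤ 1)
    (hpos : ∀ i ≤ d, 0 ≤ p i)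
    (h : ∀ i < d, (1 - x) * p i ≤ p (i + 1) ∧ p (i + 1) ≤ (1 + x) * p i) :
    ∀ s a, a + s ≤ d → (1 - x) ^ s * p a ≤ p (a + s) ∧ (1 - x) ^ s * p (a + s) ≤ p a := by
  intro s
  induction s with
  | zero => intro a _; simp
  | succ s ih =>
    intro a ha
    have ha' : a + s ≤ d := by omega
    have hd : a + s < d := by omega
    obtain ⟨ih1, ih2⟩ := ih a ha'
    obtain ⟨h1, h2⟩ := h (a + s) hd
    have h1x : (0:ℝ) ≤ 1 - x := by linarith
    have hps : 0 ≤ p (a + s) := hpos _ hd.le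
    have hpw : (0:ℝ) ≤ (1 - x) ^ s := pow_nonneg h1x s
    constructor
    · have : (1 - x) ^ (s + 1) * p a = (1 - x) * ((1 - x) ^ s * p a) := by ring
      rw [this]
      calc (1 - x) * ((1 - x) ^ s * p a) ≤ (1 - x) * p (a + s) :=
            mul_le_mul_of_nonneg_left ih1 h1x
        _ ≤ p (a + s + 1) := h1
    · calc (1 - x) ^ (s + 1) * p (a + (s + 1))
          ≤ (1 - x) ^ (s + 1) * ((1 + x) * p (a + s)) := by
            exact mul_le_mul_of_nonneg_left h2 (pow_nonneg h1x _)
        _ ≤ (1 - x) ^ s * p (a + s) := by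
            rw [pow_succ]
            have e : (1 - x) ^ s * (1 - x) * ((1 + x) * p (a + s))
                = (1 - x) ^ s * p (a + s) * (1 - x ^ 2) := by ring
            rw [e]
            nlinarith [mul_nonneg hpw hps, sq_nonneg x]
        _ ≤ p a := ih2

lemma far_mass (d L : ℕ) (p : ℕ → ℝ) (x : ℝ) (hx0 : 0 ≤ x) (hx1 : x ≤ 1)
    (hL1 : 1 ≤ L) (hdL : 6 * L ≤ d)
    (hpos : ∀ i ≤ d, 0 ≤ p i) (hsum : ∑ i ∈ Finset.range (d + 1), p i = 1)
    (h : ∀ i < d, (1 - x) * p i ≤ p (i + 1) ∧ p (i + 1) ≤ (1 + x) * p i)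
    (hhalf : (1 / 2 : ℝ) ≤ (1 - x) ^ (2 * L)) :
    ∀ i ∈ Finset.range (d + 1),
      (1 : ℝ) / 3 ≤ ∑ j ∈ (Finset.range (d + 1)).filter
        (fun j => i + L ≤ j ∨ j + L ≤ i), p j := by
  intro i hi
  have hid : i ≤ d := by simpa [Nat.lt_succ_iff] using hi
  set F := (Finset.range (d + 1)).filter (fun j => i + L ≤ j ∨ j + L ≤ i) with hF
  set N := (Finset.range (d + 1)).filter (fun j => ¬(i + L ≤ j ∨ j + L ≤ i)) with hN
  have hsplit : (∑ j ∈ F, p j) + (∑ j ∈ N, p j) = 1 := by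
    rw [hF, hN, Finset.sum_filter_add_sum_filter_not, hsum]
  have chain := chain_bound d p x hx0 hx1 hpos h (2 * L)
  have hNmem : ∀ j ∈ N, j ≤ d ∧ j < i + L ∧ i < j + L := by
    intro j hj
    rw [hN, Finset.mem_filter, Finset.mem_range] at hj
    omega
  have hNF : (∑ j ∈ N, p j) ≤ 2 * ∑ j ∈ F, p j := by
    by_cases hcase : i + 3 * L ≤ d + 1
    · -- shift right by 2L
      have hstep : ∀ j ∈ N, p j ≤ 2 * p (j + 2 * L) := by
        intro j hj
        obtain ⟨hj1, hj2, hj3⟩ := hNmem j hj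
        obtain ⟨c1, -⟩ := chain j (by omega)
        have hpj := hpos j hj1
        nlinarith [mul_le_mul_of_nonneg_right hhalf hpj]
      have himg : ∀ j ∈ N, j + 2 * L ∈ F := by
        intro j hj
        obtain ⟨hj1, hj2, hj3⟩ := hNmem j hj
        rw [hF, Finset.mem_filter, Finset.mem_range]
        omega
      calc (∑ j ∈ N, p j) ≤ ∑ j ∈ N, 2 * p (j + 2 * L) := Finset.sum_le_sum hstep
        _ = 2 * ∑ j ∈ N, p (j + 2 * L) := by rw [Finset.mul_sum]
        _ = 2 * ∑ j ∈ N.image (fun j => j + 2 * L), p j := by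
            rw [Finset.sum_image (by intro a _ b _ hab; simp only at hab; omega)]
        _ ≤ 2 * ∑ j ∈ F, p j := by
            have hsub : N.image (fun j => j + 2 * L) ⊆ F := by
              intro j' hj'
              obtain ⟨j, hj, rfl⟩ := Finset.mem_image.mp hj'
              exact himg j hj
            have := Finset.sum_le_sum_of_subset_of_nonneg hsub (by
              intro j hjF _
              rw [hF, Finset.mem_filter, Finset.mem_range] at hjF
              exact hpos j (by omega))
            linarith
    · -- shift left by 2L
      have hige : d + 2 ≤ i + 3 * L := by omega
      have hjge : ∀ j ∈ N, 2 * L + 2 ≤ j := by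
        intro j hj
        obtain ⟨hj1, hj2, hj3⟩ := hNmem j hj
        omega
      have hstep : ∀ j ∈ N, p j ≤ 2 * p (j - 2 * L) := by
        intro j hj
        obtain ⟨hj1, hj2, hj3⟩ := hNmem j hj
        have hjg := hjge j hj
        obtain ⟨-, c2⟩ := chain (j - 2 * L) (by omega)
        rw [show j - 2 * L + 2 * L = j by omega] at c2
        have hpj := hpos j hj1
        nlinarith [mul_le_mul_of_nonneg_right hhalf hpj]
      have himg : ∀ j ∈ N, j - 2 * L ∈ F := by
        intro j hj
        obtain ⟨hj1, hj2, hj3⟩ := hNmem j hj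
        have hjg := hjge j hj
        rw [hF, Finset.mem_filter, Finset.mem_range]
        omega
      calc (∑ j ∈ N, p j) ≤ ∑ j ∈ N, 2 * p (j - 2 * L) := Finset.sum_le_sum hstep
        _ = 2 * ∑ j ∈ N, p (j - 2 * L) := by rw [Finset.mul_sum]
        _ = 2 * ∑ j ∈ N.image (fun j => j - 2 * L), p j := by
            rw [Finset.sum_image (by
              intro a ha b hb hab
              have := hjge a ha
              have := hjge b hb
              simp only at hab
              omega)]
        _ ≤ 2 * ∑ j ∈ F, p j := by
            have hsub : N.image (fun j => j - 2 * L) ⊆ F := by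
              intro j' hj'
              obtain ⟨j, hj, rfl⟩ := Finset.mem_image.mp hj'
              exact himg j hj
            have := Finset.sum_le_sum_of_subset_of_nonneg hsub (by
              intro j hjF _
              rw [hF, Finset.mem_filter, Finset.mem_range] at hjF
              exact hpos j (by omega))
            linarith
  linarith


lemma step_lemma (d L : ℕ) (p : ℕ → ℝ) (z₀ : ℤ) (hpos : ∀ i ≤ d, 0 ≤ p i)
    (key : ∀ i ∈ Finset.range (d + 1), (1:ℝ)/3 ≤ ∑ j ∈ (Finset.range (d + 1)).filter
        (fun j => i + L ≤ j ∨ j + L ≤ i), p j) :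
    ∀ i ∈ Finset.range (d + 1), 16 * (L : ℝ) ^ 2 / 3 * p i
      ≤ ∑ j ∈ Finset.range (d + 1), p i * p j * (((z₀:ℝ) + 4*(i:ℝ)) - ((z₀:ℝ) + 4*(j:ℝ))) ^ 2 := by
  intro i hi
  have hid : i ≤ d := by simpa [Nat.lt_succ_iff] using hi
  have hpi := hpos i hid
  set F := (Finset.range (d + 1)).filter (fun j => i + L ≤ j ∨ j + L ≤ i) with hF
  have hterm : ∀ j ∈ F, p i * p j * (16 * (L : ℝ) ^ 2)
      ≤ p i * p j * (((z₀:ℝ) + 4*(i:ℝ)) - ((z₀:ℝ) + 4*(j:ℝ))) ^ 2 := by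
    intro j hj
    rw [hF, Finset.mem_filter, Finset.mem_range] at hj
    obtain ⟨hjd, hcond⟩ := hj
    have hpj := hpos j (by omega)
    have hsq : 16 * (L : ℝ) ^ 2 ≤ (((z₀:ℝ) + 4*(i:ℝ)) - ((z₀:ℝ) + 4*(j:ℝ))) ^ 2 := by
      have hXe : (((z₀:ℝ) + 4*(i:ℝ)) - ((z₀:ℝ) + 4*(j:ℝ))) = 4 * ((i : ℝ) - (j : ℝ)) := by ring
      rw [hXe]
      rcases hcond with hc1 | hc1
      · have h5 : (i : ℝ) + (L : ℝ) ≤ (j : ℝ) := by exact_mod_cast hc1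
        nlinarith [Nat.cast_nonneg (α := ℝ) L]
      · have h5 : (j : ℝ) + (L : ℝ) ≤ (i : ℝ) := by exact_mod_cast hc1
        nlinarith [Nat.cast_nonneg (α := ℝ) L]
    exact mul_le_mul_of_nonneg_left hsq (by positivity)
  calc 16 * (L : ℝ) ^ 2 / 3 * p i = p i * (16 * (L : ℝ) ^ 2) * (1 / 3) := by ring
    _ ≤ p i * (16 * (L : ℝ) ^ 2) * ∑ j ∈ F, p j := by
        have h3 := key i hi
        exact mul_le_mul_of_nonneg_left (by rw [hF]; exact h3) (by positivity)
    _ = ∑ j ∈ F, p i * p j * (16 * (L : ℝ) ^ 2) := by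
        rw [Finset.mul_sum]; exact Finset.sum_congr rfl (fun j _ => by ring)
    _ ≤ ∑ j ∈ F, p i * p j * (((z₀:ℝ) + 4*(i:ℝ)) - ((z₀:ℝ) + 4*(j:ℝ))) ^ 2 :=
        Finset.sum_le_sum hterm
    _ ≤ ∑ j ∈ Finset.range (d + 1), p i * p j * (((z₀:ℝ) + 4*(i:ℝ)) - ((z₀:ℝ) + 4*(j:ℝ))) ^ 2 := by
        apply Finset.sum_le_sum_of_subset_of_nonneg (Finset.filter_subset _ _)
        intro j hj _
        have hjd : j ≤ d := by simpa [Nat.lt_succ_iff] using hj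
        have := hpos j hjd
        positivity



/-- An almost-flat distribution on an arithmetic progression of step 4 with at least
`c√n/2` points (consecutive probability ratios within `1 ± K/√n`) has variance at
least `C·n` for a constant `C > 0` depending only on `K` and `c`, for `n` large. -/
theorem stmt_13 (K c : ℝ) (hK : 0 < K) (hc : 0 < c) :
    ∃ C > 0, ∃ n₀ : ℕ, ∀ n : ℕ, n₀ ≤ n →
      ∀ (z₀ : ℤ) (d : ℕ) (p : ℕ → ℝ),
        (∀ i ≤ d, 0 ≤ p i) →
        (∑ i ∈ Finset.range (d + 1), p i = 1) →
        (∀ i < d, (1 - K / Real.sqrt n) * p i ≤ p (i + 1)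
          ∧ p (i + 1) ≤ (1 + K / Real.sqrt n) * p i) →
        c * Real.sqrt n / 2 ≤ (d : ℝ) →
        C * (n : ℝ) ≤ ∑ i ∈ Finset.range (d + 1),
          p i * (((z₀ : ℝ) + 4 * (i : ℝ))
            - ∑ j ∈ Finset.range (d + 1), p j * ((z₀ : ℝ) + 4 * (j : ℝ))) ^ 2 := by
  obtain ⟨γ, hγ8, hγc, hγ⟩ : ∃ γ : ℝ, γ ≤ 1 / (8 * K) ∧ γ ≤ c / 24 ∧ 0 < γ :=
    ⟨min (1 / (8 * K)) (c / 24), min_le_left _ _, min_le_right _ _,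
      lt_min (by positivity) (by positivity)⟩
  refine ⟨2 * γ ^ 2, by positivity, ⌈1 / γ ^ 2⌉₊ + 1, ?_⟩
  intro n hn z₀ d p hpos hsum hratio hd
  -- basic facts about n and sqrt n
  have hn1 : 1 / γ ^ 2 ≤ (n : ℝ) := by
    calc 1 / γ ^ 2 ≤ (⌈1 / γ ^ 2⌉₊ : ℝ) := Nat.le_ceil _
      _ ≤ (n : ℝ) := by exact_mod_cast Nat.le_of_succ_le hn
  clear hn
  have hsn : 1 / γ ≤ Real.sqrt n := by
    have h1 := Real.sqrt_le_sqrt hn1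
    rwa [show 1 / γ ^ 2 = (1 / γ) ^ 2 by ring, Real.sqrt_sq (by positivity)] at h1
  have hsn0 : 0 < Real.sqrt n := lt_of_lt_of_le (by positivity) hsn
  have hγs : 1 ≤ γ * Real.sqrt n := by
    have h1 := mul_le_mul_of_nonneg_left hsn hγ.le
    rwa [mul_one_div, div_self hγ.ne'] at h1
  obtain ⟨x, hxdef⟩ : ∃ x : ℝ, x = K / Real.sqrt n := ⟨_, rfl⟩
  rw [← hxdef] at hratio
  have hx0 : 0 ≤ x := by rw [hxdef]; positivity
  obtain ⟨L, hLge, hLle, hL1⟩ : ∃ L : ℕ, γ * Real.sqrt n ≤ (L : ℝ) ∧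
      (L : ℝ) ≤ 2 * (γ * Real.sqrt n) ∧ 1 ≤ L := by
    refine ⟨⌈γ * Real.sqrt n⌉₊, Nat.le_ceil _, ?_, Nat.one_le_ceil_iff.mpr (by positivity)⟩
    have h1 : ((⌈γ * Real.sqrt n⌉₊ : ℝ)) < γ * Real.sqrt n + 1 :=
      Nat.ceil_lt_add_one (by positivity : (0:ℝ) ≤ γ * Real.sqrt n)
    linarith
  have hL1' : (1 : ℝ) ≤ (L : ℝ) := by exact_mod_cast hL1
  have hsx : Real.sqrt n * x = K := by
    rw [hxdef, mul_div_cancel₀ _ hsn0.ne']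
  have hγK : γ * (8 * K) ≤ 1 := by
    rwa [le_div_iff₀ (by positivity)] at hγ8
  have h2Lx : 2 * (L : ℝ) * x ≤ 1 / 2 := by
    have h1 : 2 * (L : ℝ) * x ≤ 2 * (2 * (γ * Real.sqrt n)) * x := by
      have := mul_le_mul_of_nonneg_right hLle hx0
      nlinarith
    have h2 : 2 * (2 * (γ * Real.sqrt n)) * x = 4 * γ * K := by
      rw [show 2 * (2 * (γ * Real.sqrt n)) * x = 4 * γ * (Real.sqrt n * x) by ring, hsx]
    nlinarith
  have hx1 : x ≤ 1 := by nlinarith [mul_nonneg hx0 (by linarith : (0:ℝ) ≤ 2 * (L:ℝ) - 1)]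
  have hhalf : (1 / 2 : ℝ) ≤ (1 - x) ^ (2 * L) := by
    have h1 := one_add_mul_le_pow (a := -x) (by linarith) (2 * L)
    rw [show (1 : ℝ) + -x = 1 - x by ring] at h1
    push_cast at h1
    linarith
  have hdL : 6 * L ≤ d := by
    have h1 : γ * Real.sqrt n ≤ (c / 24) * Real.sqrt n :=
      mul_le_mul_of_nonneg_right hγc hsn0.le
    have h2 : (6 * L : ℝ) ≤ (d : ℝ) := by
      push_cast
      nlinarith
    exact_mod_cast h2
  -- variance identity and final bound
  have key := far_mass d L p x hx0 hx1 hL1 hdL hpos hsum hratio hhalf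
  have step := step_lemma d L p z₀ hpos key
  have tot : 16 * (L : ℝ) ^ 2 / 3 ≤ ∑ i ∈ Finset.range (d + 1), ∑ j ∈ Finset.range (d + 1),
      p i * p j * (((z₀ : ℝ) + 4 * (i : ℝ)) - ((z₀ : ℝ) + 4 * (j : ℝ))) ^ 2 := by
    calc 16 * (L : ℝ) ^ 2 / 3 = ∑ i ∈ Finset.range (d + 1), 16 * (L : ℝ) ^ 2 / 3 * p i := by
          rw [← Finset.mul_sum, hsum, mul_one]
      _ ≤ _ := Finset.sum_le_sum step
  have hvar : ∑ i ∈ Finset.range (d + 1),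
        p i * (((z₀ : ℝ) + 4 * (i : ℝ))
          - ∑ j ∈ Finset.range (d + 1), p j * ((z₀ : ℝ) + 4 * (j : ℝ))) ^ 2
      = (1 / 2) * ∑ i ∈ Finset.range (d + 1), ∑ j ∈ Finset.range (d + 1),
          p i * p j * (((z₀ : ℝ) + 4 * (i : ℝ)) - ((z₀ : ℝ) + 4 * (j : ℝ))) ^ 2 :=
    var_double_sum (Finset.range (d + 1)) p (fun i => (z₀ : ℝ) + 4 * (i : ℝ)) hsum
  rw [hvar]
  have hLn : γ ^ 2 * (n : ℝ) ≤ (L : ℝ) ^ 2 := by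
    have h1 : (γ * Real.sqrt n) ^ 2 ≤ (L : ℝ) ^ 2 :=
      pow_le_pow_left₀ (by positivity) hLge 2
    rwa [mul_pow, Real.sq_sqrt (Nat.cast_nonneg n)] at h1
  linarith [sq_nonneg ((L : ℝ))]
end

section
/- Let N₁, N₂, N₃ be the counts of the three outcomes in t i.i.d. trials each uniform on three values. If (n₁, n₂, n₃) with n₁+n₂+n₃ = t and each nᵢ within k√t of t/3 for a fixed constant k, then P(N₁=n₁, N₂=n₂, N₃=n₃) = multinomial(t; n₁,n₂,n₃)·(1/3)^t ≥ k₀/t for a constant k₀ > 0 depending only on k, for all t large enough. -/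
open Real

noncomputable def stD (n : ℕ) : ℝ := Real.sqrt (2 * n) * ((n : ℝ) / Real.exp 1) ^ n

lemma stD_pos {n : ℕ} (hn : 1 ≤ n) : 0 < stD n := by
  have : (0:ℝ) < n := by exact_mod_cast hn
  unfold stD; positivity

lemma stirling_low {a : ℝ} (ha : ∀ n : ℕ, a ≤ Stirling.stirlingSeq (n + 1)) {n : ℕ}
    (hn : 1 ≤ n) : a * stD n ≤ n.factorial := by
  obtain ⟨m, rfl⟩ := Nat.exists_eq_add_of_le hn
  have hD := stD_pos (n := 1 + m) hn
  have h1 : a ≤ Stirling.stirlingSeq (1 + m) := by rw [Nat.add_comm]; exact ha m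
  have h2 : Stirling.stirlingSeq (1 + m) * stD (1 + m) = (1 + m).factorial := by
    rw [Stirling.stirlingSeq, stD, div_mul_cancel₀]
    exact ne_of_gt (by simpa [stD] using hD)
  nlinarith [mul_le_mul_of_nonneg_right h1 hD.le]

lemma stirling_up {n : ℕ} (hn : 1 ≤ n) :
    (n.factorial : ℝ) ≤ Stirling.stirlingSeq 1 * stD n := by
  obtain ⟨m, rfl⟩ := Nat.exists_eq_add_of_le hn
  have hD := stD_pos (n := 1 + m) hn
  have h1 : Stirling.stirlingSeq (1 + m) ≤ Stirling.stirlingSeq 1 := by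
    rw [Nat.add_comm]
    exact Stirling.stirlingSeq'_antitone (Nat.zero_le m)
  have h2 : Stirling.stirlingSeq (1 + m) * stD (1 + m) = (1 + m).factorial := by
    rw [Stirling.stirlingSeq, stD, div_mul_cancel₀]
    exact ne_of_gt (by simpa [stD] using hD)
  nlinarith [mul_le_mul_of_nonneg_right h1 hD.le]


lemma arith_ge_one {k s x m : ℝ} (hk : 0 < k) (hs0 : 0 ≤ s) (hs2 : s ^ 2 = x)
    (hsge : 3 * k + 3 ≤ s) (h : -(k * s) ≤ m - x / 3) : 1 ≤ m := by
  nlinarith [mul_le_mul_of_nonneg_right hsge hs0]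

lemma arith_sq {k s x m : ℝ} (hs2 : s ^ 2 = x) (h1 : -(k * s) ≤ m - x / 3)
    (h2 : m - x / 3 ≤ k * s) : (m - x / 3) ^ 2 ≤ k ^ 2 * x := by
  nlinarith [mul_nonneg (show (0:ℝ) ≤ k * s - (m - x/3) by linarith)
    (show (0:ℝ) ≤ k * s + (m - x/3) by linarith)]

lemma arith_sumsq {k x m₁ m₂ m₃ : ℝ} (hx : m₁ + m₂ + m₃ = x)
    (h1 : (m₁ - x/3) ^ 2 ≤ k ^ 2 * x) (h2 : (m₂ - x/3) ^ 2 ≤ k ^ 2 * x)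
    (h3 : (m₃ - x/3) ^ 2 ≤ k ^ 2 * x) :
    3 * (m₁ ^ 2 + m₂ ^ 2 + m₃ ^ 2) ≤ x ^ 2 + 9 * k ^ 2 * x := by subst hx; nlinarith

set_option maxHeartbeats 1000000 in
/-- Local central limit lower bound for the symmetric multinomial distribution with
three equiprobable outcomes: for any constant `k`, there is `k₀ > 0` such that for `t`
large, any outcome vector `(n₁,n₂,n₃)` with `n₁+n₂+n₃ = t` and each `nᵢ` within `k√t`
of `t/3` satisfies `multinomial(t; n₁,n₂,n₃)·(1/3)^t ≥ k₀/t`. -/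
theorem stmt_15 (k : ℝ) (hk : 0 < k) :
    ∃ k₀ > 0, ∃ t₀ : ℕ, ∀ t : ℕ, t₀ ≤ t →
      ∀ n₁ n₂ n₃ : ℕ, n₁ + n₂ + n₃ = t →
        |(n₁ : ℝ) - t / 3| ≤ k * Real.sqrt t →
        |(n₂ : ℝ) - t / 3| ≤ k * Real.sqrt t →
        |(n₃ : ℝ) - t / 3| ≤ k * Real.sqrt t →
        k₀ / t ≤ ((t.factorial : ℝ)
            / (n₁.factorial * n₂.factorial * n₃.factorial)) * (1 / 3) ^ t := by
  obtain ⟨a, ha0, ha⟩ := Stirling.stirlingSeq'_bounded_by_pos_constant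
  have hC0 : 0 < Stirling.stirlingSeq 1 := Stirling.stirlingSeq'_pos 0
  set C := Stirling.stirlingSeq 1 with hCdef
  refine ⟨a * Real.exp (-(9 * k ^ 2)) / (2 * C ^ 3), by positivity, ⌈(3 * k + 3) ^ 2⌉₊, ?_⟩
  intro t ht n₁ n₂ n₃ hsum hb1 hb2 hb3
  have hxceil : ((3 * k + 3) ^ 2 : ℝ) ≤ (t : ℝ) := by
    have := Nat.ceil_le.mp ht
    exact_mod_cast this
  subst hsum
  set m₁ := (n₁ : ℝ) with hm1def
  set m₂ := (n₂ : ℝ) with hm2def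
  set m₃ := (n₃ : ℝ) with hm3def
  have hxcast : ((n₁ + n₂ + n₃ : ℕ) : ℝ) = m₁ + m₂ + m₃ := by push_cast; ring
  rw [hxcast] at hb1 hb2 hb3 hxceil
  set x : ℝ := m₁ + m₂ + m₃ with hxdef
  set s : ℝ := Real.sqrt x with hsdef
  have hm1nn : (0:ℝ) ≤ m₁ := Nat.cast_nonneg _
  have hm2nn : (0:ℝ) ≤ m₂ := Nat.cast_nonneg _
  have hm3nn : (0:ℝ) ≤ m₃ := Nat.cast_nonneg _
  have hxnn : (0:ℝ) ≤ x := by positivity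
  have hs0 : (0:ℝ) ≤ s := Real.sqrt_nonneg _
  have hs2 : s ^ 2 = x := Real.sq_sqrt hxnn
  have hsge : 3 * k + 3 ≤ s := by
    have h := Real.sqrt_le_sqrt hxceil
    rwa [Real.sqrt_sq (by positivity)] at h
  have habs1 := abs_le.mp hb1
  have habs2 := abs_le.mp hb2
  have habs3 := abs_le.mp hb3
  have hm1ge : (1:ℝ) ≤ m₁ := arith_ge_one hk hs0 hs2 hsge habs1.1
  have hm2ge : (1:ℝ) ≤ m₂ := arith_ge_one hk hs0 hs2 hsge habs2.1
  have hm3ge : (1:ℝ) ≤ m₃ := arith_ge_one hk hs0 hs2 hsge habs3.1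
  have hn1 : 1 ≤ n₁ := Nat.one_le_cast.mp hm1ge
  have hn2 : 1 ≤ n₂ := Nat.one_le_cast.mp hm2ge
  have hn3 : 1 ≤ n₃ := Nat.one_le_cast.mp hm3ge
  have hnt : 1 ≤ n₁ + n₂ + n₃ := by omega
  have hx0 : (0:ℝ) < x := by linarith
  have hm10 : (0:ℝ) < m₁ := by linarith
  have hm20 : (0:ℝ) < m₂ := by linarith
  have hm30 : (0:ℝ) < m₃ := by linarith
  -- Stirling bounds
  have hD1 := stD_pos hn1
  have hD2 := stD_pos hn2
  have hD3 := stD_pos hn3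
  have hDt := stD_pos hnt
  have hlow : a * stD (n₁ + n₂ + n₃) ≤ ((n₁ + n₂ + n₃).factorial : ℝ) := stirling_low ha hnt
  have hup1 := stirling_up hn1
  have hup2 := stirling_up hn2
  have hup3 := stirling_up hn3
  have hdenom : (n₁.factorial : ℝ) * n₂.factorial * n₃.factorial
      ≤ C ^ 3 * (stD n₁ * stD n₂ * stD n₃) := by
    calc (n₁.factorial : ℝ) * n₂.factorial * n₃.factorial
        ≤ (C * stD n₁) * (C * stD n₂) * (C * stD n₃) := by
          gcongr <;> positivity
      _ = C ^ 3 * (stD n₁ * stD n₂ * stD n₃) := by ring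
  have key1 : a * stD (n₁ + n₂ + n₃) / (C ^ 3 * (stD n₁ * stD n₂ * stD n₃))
      ≤ ((n₁ + n₂ + n₃).factorial : ℝ) / (n₁.factorial * n₂.factorial * n₃.factorial) :=
    div_le_div₀ (by positivity) hlow (by positivity) hdenom
  have key2 := mul_le_mul_of_nonneg_right key1
    (by positivity : (0:ℝ) ≤ (1/3 : ℝ) ^ (n₁ + n₂ + n₃))
  refine le_trans ?_ key2
  -- rewrite the small side
  have hE : Real.exp 1 ≠ 0 := (Real.exp_pos 1).ne'
  have heq : a * stD (n₁ + n₂ + n₃) / (C ^ 3 * (stD n₁ * stD n₂ * stD n₃))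
        * (1/3 : ℝ) ^ (n₁ + n₂ + n₃)
      = a / C ^ 3
        * (Real.sqrt (2 * x) / (Real.sqrt (2 * m₁) * Real.sqrt (2 * m₂) * Real.sqrt (2 * m₃)))
        * (x ^ (n₁ + n₂ + n₃) / ((3 * m₁) ^ n₁ * (3 * m₂) ^ n₂ * (3 * m₃) ^ n₃)) := by
    unfold stD
    rw [hxcast, ← hm1def, ← hm2def, ← hm3def]
    have hs1 : Real.sqrt (2 * m₁) ≠ 0 := by positivity
    have hs2' : Real.sqrt (2 * m₂) ≠ 0 := by positivity
    have hs3 : Real.sqrt (2 * m₃) ≠ 0 := by positivity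
    have hsx : Real.sqrt (2 * x) ≠ 0 := by positivity
    field_simp
    simp only [div_pow, mul_pow, one_pow]
    field_simp
    ring
  rw [heq]
  -- bound the sqrt factor
  have hsqx : Real.sqrt (2 * x) * Real.sqrt (2 * x) = 2 * x :=
    Real.mul_self_sqrt (by positivity)
  have hsx0 : (0:ℝ) < Real.sqrt (2 * x) := Real.sqrt_pos.mpr (by positivity)
  have hFA : 1 / (2 * x)
      ≤ Real.sqrt (2 * x) / (Real.sqrt (2 * m₁) * Real.sqrt (2 * m₂) * Real.sqrt (2 * m₃)) := by
    have e1 : Real.sqrt (2 * m₁) ≤ Real.sqrt (2 * x) := Real.sqrt_le_sqrt (by simp [hxdef]; linarith)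
    have e2 : Real.sqrt (2 * m₂) ≤ Real.sqrt (2 * x) := Real.sqrt_le_sqrt (by simp [hxdef]; linarith)
    have e3 : Real.sqrt (2 * m₃) ≤ Real.sqrt (2 * x) := Real.sqrt_le_sqrt (by simp [hxdef]; linarith)
    have hP0 : (0:ℝ) < Real.sqrt (2 * m₁) * Real.sqrt (2 * m₂) * Real.sqrt (2 * m₃) := by
      have := Real.sqrt_pos.mpr (show (0:ℝ) < 2 * m₁ by linarith)
      have := Real.sqrt_pos.mpr (show (0:ℝ) < 2 * m₂ by linarith)
      have := Real.sqrt_pos.mpr (show (0:ℝ) < 2 * m₃ by linarith)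
      positivity
    have hP : Real.sqrt (2 * m₁) * Real.sqrt (2 * m₂) * Real.sqrt (2 * m₃)
        ≤ 2 * x * Real.sqrt (2 * x) := by
      calc Real.sqrt (2 * m₁) * Real.sqrt (2 * m₂) * Real.sqrt (2 * m₃)
          ≤ Real.sqrt (2 * x) * Real.sqrt (2 * x) * Real.sqrt (2 * x) := by
            gcongr <;> positivity
        _ = 2 * x * Real.sqrt (2 * x) := by rw [hsqx]
    rw [div_le_div_iff₀ (by positivity) hP0, one_mul]
    calc Real.sqrt (2 * m₁) * Real.sqrt (2 * m₂) * Real.sqrt (2 * m₃)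
        ≤ 2 * x * Real.sqrt (2 * x) := hP
      _ = Real.sqrt (2 * x) * (2 * x) := by ring
  -- bound the entropy factor
  have hsq1 : (m₁ - x / 3) ^ 2 ≤ k ^ 2 * x := arith_sq hs2 habs1.1 habs1.2
  have hsq2 : (m₂ - x / 3) ^ 2 ≤ k ^ 2 * x := arith_sq hs2 habs2.1 habs2.2
  have hsq3 : (m₃ - x / 3) ^ 2 ≤ k ^ 2 * x := arith_sq hs2 habs3.1 habs3.2
  have hsumsq : 3 * (m₁ ^ 2 + m₂ ^ 2 + m₃ ^ 2) ≤ x ^ 2 + 9 * k ^ 2 * x :=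
    arith_sumsq rfl hsq1 hsq2 hsq3
  have hFB : Real.exp (-(9 * k ^ 2))
      ≤ x ^ (n₁ + n₂ + n₃) / ((3 * m₁) ^ n₁ * (3 * m₂) ^ n₂ * (3 * m₃) ^ n₃) := by
    have hQ0 : (0:ℝ) < (3 * m₁) ^ n₁ * (3 * m₂) ^ n₂ * (3 * m₃) ^ n₃ := by positivity
    rw [le_div_iff₀ hQ0]
    have hb : ∀ m : ℝ, 0 < m → 3 * m ≤ x * Real.exp (3 * m / x - 1) := by
      intro m hm
      have h := Real.add_one_le_exp (3 * m / x - 1)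
      have h2 : 3 * m / x ≤ Real.exp (3 * m / x - 1) := by linarith
      calc 3 * m = 3 * m / x * x := by field_simp
        _ ≤ Real.exp (3 * m / x - 1) * x := mul_le_mul_of_nonneg_right h2 hxnn
        _ = x * Real.exp (3 * m / x - 1) := by ring
    have p1 : (3 * m₁) ^ n₁ ≤ (x * Real.exp (3 * m₁ / x - 1)) ^ n₁ :=
      pow_le_pow_left₀ (by positivity) (hb m₁ hm10) _
    have p2 : (3 * m₂) ^ n₂ ≤ (x * Real.exp (3 * m₂ / x - 1)) ^ n₂ :=
      pow_le_pow_left₀ (by positivity) (hb m₂ hm20) _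
    have p3 : (3 * m₃) ^ n₃ ≤ (x * Real.exp (3 * m₃ / x - 1)) ^ n₃ :=
      pow_le_pow_left₀ (by positivity) (hb m₃ hm30) _
    have hQle : (3 * m₁) ^ n₁ * (3 * m₂) ^ n₂ * (3 * m₃) ^ n₃
        ≤ x ^ (n₁ + n₂ + n₃) * Real.exp (m₁ * (3 * m₁ / x - 1) + m₂ * (3 * m₂ / x - 1)
            + m₃ * (3 * m₃ / x - 1)) := by
      calc (3 * m₁) ^ n₁ * (3 * m₂) ^ n₂ * (3 * m₃) ^ n₃
          ≤ (x * Real.exp (3 * m₁ / x - 1)) ^ n₁ * (x * Real.exp (3 * m₂ / x - 1)) ^ n₂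
            * (x * Real.exp (3 * m₃ / x - 1)) ^ n₃ := by
            refine mul_le_mul (mul_le_mul p1 p2 (by positivity) (by positivity)) p3
              (by positivity) (by positivity)
        _ = x ^ (n₁ + n₂ + n₃) * (Real.exp ((n₁:ℝ) * (3 * m₁ / x - 1))
            * Real.exp ((n₂:ℝ) * (3 * m₂ / x - 1)) * Real.exp ((n₃:ℝ) * (3 * m₃ / x - 1))) := by
            rw [mul_pow, mul_pow, mul_pow, ← Real.exp_nat_mul, ← Real.exp_nat_mul,
              ← Real.exp_nat_mul, pow_add, pow_add]
            ring
        _ = x ^ (n₁ + n₂ + n₃) * Real.exp (m₁ * (3 * m₁ / x - 1) + m₂ * (3 * m₂ / x - 1)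
            + m₃ * (3 * m₃ / x - 1)) := by
            rw [← Real.exp_add, ← Real.exp_add, hm1def, hm2def, hm3def]
    have hexple : m₁ * (3 * m₁ / x - 1) + m₂ * (3 * m₂ / x - 1) + m₃ * (3 * m₃ / x - 1)
        ≤ 9 * k ^ 2 := by
      have heq2 : m₁ * (3 * m₁ / x - 1) + m₂ * (3 * m₂ / x - 1) + m₃ * (3 * m₃ / x - 1)
          = (3 * (m₁ ^ 2 + m₂ ^ 2 + m₃ ^ 2) - x ^ 2) / x := by
        field_simp
        ring
      rw [heq2, div_le_iff₀ hx0]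
      linarith [hsumsq]
    calc Real.exp (-(9 * k ^ 2)) * ((3 * m₁) ^ n₁ * (3 * m₂) ^ n₂ * (3 * m₃) ^ n₃)
        ≤ Real.exp (-(9 * k ^ 2)) * (x ^ (n₁ + n₂ + n₃) * Real.exp (9 * k ^ 2)) := by
          refine mul_le_mul_of_nonneg_left ?_ (Real.exp_nonneg _)
          refine hQle.trans ?_
          exact mul_le_mul_of_nonneg_left (Real.exp_le_exp.mpr hexple) (by positivity)
      _ = x ^ (n₁ + n₂ + n₃) := by
          rw [mul_comm, mul_assoc, ← Real.exp_add]
          simp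
  -- final combination
  calc a * Real.exp (-(9 * k ^ 2)) / (2 * C ^ 3) / ((n₁ + n₂ + n₃ : ℕ) : ℝ)
      = a / C ^ 3 * (1 / (2 * x)) * Real.exp (-(9 * k ^ 2)) := by
        rw [hxcast]
        field_simp
    _ ≤ a / C ^ 3
        * (Real.sqrt (2 * x) / (Real.sqrt (2 * m₁) * Real.sqrt (2 * m₂) * Real.sqrt (2 * m₃)))
        * (x ^ (n₁ + n₂ + n₃) / ((3 * m₁) ^ n₁ * (3 * m₂) ^ n₂ * (3 * m₃) ^ n₃)) := by
        have h1 : (0:ℝ) ≤ a / C ^ 3 := by positivity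
        have h2 : (0:ℝ) ≤ 1 / (2 * x) := by positivity
        refine mul_le_mul (mul_le_mul_of_nonneg_left hFA h1) hFB (Real.exp_nonneg _) ?_
        positivity
end
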